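/- Let L be a commutative unital quantale and let (P, e) be an algebraic L-dcpo. Equip the set K(P) of compact elements with the operator ⟨A⟩ = ⋁_{x∈K(P)} A(x) ⊗ (↓x restricted to K(P)) for A : K(P) → L, where ↓x(y) = e(y,x). Then (K(P), ⟨·⟩) is an L-closure space, and its directed closed sets are exactly the restrictions of principal lower sets: 𝔠(K(P)) = { (↓x)|_{K(P)} | x ∈ P }. -/

import Mathlib

universe u

/-- A commutative unital quantale structure on a complete lattice `L`. -/
structure CommQuantale (L : Type u) [CompleteLattice L] : Type u where
  mul : L → L → L
  mul_comm : ∀ a b, mul a b = mul b a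
  mul_assoc : ∀ a b c, mul (mul a b) c = mul a (mul b c)
  unit : L
  mul_unit : ∀ a, mul a unit = a
  mul_sSup : ∀ (a : L) (S : Set L), mul a (sSup S) = ⨆ s ∈ S, mul a s

namespace CommQuantale

variable {L : Type u} [CompleteLattice L]

/-- The residuation `b → c`, the right adjoint of `⊗`. -/
def res (Q : CommQuantale L) (b c : L) : L := sSup {a | Q.mul a b ≤ c}

/-- `sub(A,B) = ⋀ₓ (A x → B x)` for `L`-subsets. -/
def subL (Q : CommQuantale L) {X : Type u} (A B : X → L) : L :=
  ⨅ x, Q.res (A x) (B x)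

open Classical in
/-- The characteristic function `u_x`. -/
noncomputable def ux (Q : CommQuantale L) {X : Type u} (x : X) : X → L :=
  fun y => if y = x then Q.unit else ⊥

/-- `e` is an `L`-order on `P`. -/
def IsLOrder (Q : CommQuantale L) {P : Type u} (e : P → P → L) : Prop :=
  (∀ x, Q.unit ≤ e x x) ∧
  (∀ x y z, Q.mul (e x y) (e y z) ≤ e x z) ∧
  (∀ x y, Q.unit ≤ e x y → Q.unit ≤ e y x → x = y)

/-- `D` is a directed `L`-subset of `(P, e)`. -/
def IsDirectedL (Q : CommQuantale L) {P : Type u} (e : P → P → L) (D : P → L) : Prop :=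
  (Q.unit ≤ ⨆ x, D x) ∧
  (∀ x y, Q.mul (D x) (D y) ≤ ⨆ z, Q.mul (Q.mul (D z) (e x z)) (e y z))

/-- `x₀` is the supremum `⊔A` of the `L`-subset `A`. -/
def IsSupL (Q : CommQuantale L) {P : Type u} (e : P → P → L) (A : P → L) (x₀ : P) : Prop :=
  ∀ y, e x₀ y = Q.subL A (fun x => e x y)

/-- `(P, e)` is an `L`-dcpo: every directed `L`-subset has a supremum. -/
def IsDcpoL (Q : CommQuantale L) {P : Type u} (e : P → P → L) : Prop :=
  ∀ D : P → L, Q.IsDirectedL e D → ∃ s, Q.IsSupL e D s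

/-- `⇓x : P → L`, i.e. `⇓x(y) = ⋀_{D directed} (e(x, ⊔D) → ⋁_d D(d) ⊗ e(y,d))`. -/
def wayBelow (Q : CommQuantale L) {P : Type u} (e : P → P → L) (x : P) : P → L := fun y =>
  ⨅ (D : P → L) (_ : Q.IsDirectedL e D) (s : P) (_ : Q.IsSupL e D s),
    Q.res (e x s) (⨆ d, Q.mul (D d) (e y d))

/-- `(P, e)` is a continuous `L`-dcpo. -/
def IsContinuousLDcpo (Q : CommQuantale L) {P : Type u} (e : P → P → L) : Prop :=
  Q.IsLOrder e ∧ Q.IsDcpoL e ∧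
  ∀ x, Q.IsDirectedL e (Q.wayBelow e x) ∧ Q.IsSupL e (Q.wayBelow e x) x

open Classical in
/-- `k(x)(y) = e(y,x)` if `y` is compact (i.e. `u ≤ ⇓y(y)`), else `0`. -/
noncomputable def kfun (Q : CommQuantale L) {P : Type u} (e : P → P → L) (x : P) : P → L :=
  fun y => if Q.unit ≤ Q.wayBelow e y y then e y x else ⊥

/-- `(P, e)` is an algebraic `L`-dcpo. -/
noncomputable def IsAlgebraicLDcpo (Q : CommQuantale L) {P : Type u} (e : P → P → L) : Prop :=
  Q.IsLOrder e ∧ Q.IsDcpoL e ∧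
  ∀ x, Q.IsDirectedL e (Q.kfun e x) ∧ Q.IsSupL e (Q.kfun e x) x

/-- `cl` is a generalized `L`-closure operator: (GC1) and (GC2). -/
def IsGenClosure (Q : CommQuantale L) {X : Type u} (cl : (X → L) → (X → L)) : Prop :=
  (∀ A B, Q.subL A B ≤ Q.subL (cl A) (cl B)) ∧
  (∀ A, cl (cl A) ≤ cl A)

/-- Interpolation conditions (IT1)-(IT3). -/
noncomputable def IsInterpolative (Q : CommQuantale L) {X : Type u}
    (cl : (X → L) → (X → L)) : Prop :=
  (∀ x, Q.unit ≤ ⨆ t, cl (Q.ux x) t) ∧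
  (∀ x y, cl (Q.ux x) y ≤ ⨆ t, Q.mul (cl (Q.ux x) t) (cl (Q.ux t) y)) ∧
  (∀ x a b, Q.mul (cl (Q.ux x) a) (cl (Q.ux x) b) ≤
    ⨆ t, Q.mul (Q.mul (cl (Q.ux x) t) (cl (Q.ux t) a)) (cl (Q.ux t) b))

/-- `U` is a directed closed set: (DC1)-(DC4). -/
noncomputable def IsDirClosed (Q : CommQuantale L) {X : Type u}
    (cl : (X → L) → (X → L)) (U : X → L) : Prop :=
  (Q.unit ≤ ⨆ x, U x) ∧
  (∀ x, U x ≤ Q.subL (cl (Q.ux x)) U) ∧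
  (∀ x, U x ≤ ⨆ y, Q.mul (U y) (cl (Q.ux y) x)) ∧
  (∀ x y, Q.mul (U x) (U y) ≤
    ⨆ z, Q.mul (Q.mul (U z) (cl (Q.ux z) x)) (cl (Q.ux z) y))

end CommQuantale

namespace CommQuantale

variable {L : Type u} [CompleteLattice L] (Q : CommQuantale L)

lemma unit_mul' (a : L) : Q.mul Q.unit a = a := by rw [Q.mul_comm, Q.mul_unit]

lemma mul_iSup' {ι : Sort*} (a : L) (f : ι → L) :
    Q.mul a (⨆ i, f i) = ⨆ i, Q.mul a (f i) := by
  rw [iSup, Q.mul_sSup, iSup_range]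

lemma iSup_mul' {ι : Sort*} (a : L) (f : ι → L) :
    Q.mul (⨆ i, f i) a = ⨆ i, Q.mul (f i) a := by
  rw [Q.mul_comm, Q.mul_iSup']; simp only [Q.mul_comm a]

lemma mul_bot' (a : L) : Q.mul a ⊥ = ⊥ := by
  have := Q.mul_sSup a ∅
  simpa using this

lemma bot_mul' (a : L) : Q.mul ⊥ a = ⊥ := by rw [Q.mul_comm, Q.mul_bot']

lemma mul_le_mul_right' {b b' : L} (a : L) (h : b ≤ b') : Q.mul a b ≤ Q.mul a b' := by
  have h2 : Q.mul a (sSup {b, b'}) = ⨆ s ∈ ({b, b'} : Set L), Q.mul a s := Q.mul_sSup a _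
  have h3 : sSup ({b, b'} : Set L) = b' := by rw [sSup_pair, sup_eq_right.mpr h]
  calc Q.mul a b ≤ ⨆ s ∈ ({b, b'} : Set L), Q.mul a s := le_biSup _ (by simp)
    _ = Q.mul a b' := by rw [← h2, h3]

lemma mul_le_mul' {a a' b b' : L} (ha : a ≤ a') (hb : b ≤ b') :
    Q.mul a b ≤ Q.mul a' b' :=
  le_trans (Q.mul_le_mul_right' a hb)
    (by rw [Q.mul_comm a b', Q.mul_comm a' b']; exact Q.mul_le_mul_right' b' ha)

lemma le_res_iff' {a b c : L} : a ≤ Q.res b c ↔ Q.mul a b ≤ c := by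
  constructor
  · intro h
    have h1 : Q.mul (Q.res b c) b ≤ c := by
      rw [res, Q.mul_comm, Q.mul_sSup]
      exact iSup₂_le fun s hs => by rw [Q.mul_comm]; exact hs
    exact le_trans (Q.mul_le_mul' h le_rfl) h1
  · intro h; exact le_sSup h

lemma le_subL_iff' {X : Type u} {a : L} {A B : X → L} :
    a ≤ Q.subL A B ↔ ∀ x, Q.mul a (A x) ≤ B x := by
  simp [subL, le_iInf_iff, Q.le_res_iff']

lemma cl_ux' {X : Type u} (d : X → X → L) (z y : X) :
    (⨆ x, Q.mul (Q.ux z x) (d y x)) = d y z := by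
  apply le_antisymm
  · apply iSup_le; intro x
    by_cases h : x = z
    · subst h; simp [ux, Q.unit_mul']
    · simp [ux, h, Q.bot_mul']
  · have := le_iSup (fun x => Q.mul (Q.ux z x) (d y x)) z
    simpa [ux, Q.unit_mul'] using this

end CommQuantale

open CommQuantale in
/-- For an algebraic L-dcpo (P,e), the set K(P) of compact elements with
the operator ⟨A⟩ = ⋁_{x∈K(P)} A(x) ⊗ (↓x restricted to K(P)) is an L-closure space, and
its directed closed sets are exactly the restrictions of principal lower sets:
𝔠(K(P)) = {(↓x)|_{K(P)} | x ∈ P}. -/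
theorem stmt14 {L P : Type u} [CompleteLattice L] (Q : CommQuantale L)
    (e : P → P → L) (hord : Q.IsLOrder e) (hdcpo : Q.IsDcpoL e)
    (halg : ∀ x, Q.IsDirectedL e (Q.kfun e x) ∧ Q.IsSupL e (Q.kfun e x) x) :
    Q.IsGenClosure
      (fun A : {x : P // Q.unit ≤ Q.wayBelow e x x} → L =>
        fun y => ⨆ x : {x : P // Q.unit ≤ Q.wayBelow e x x}, Q.mul (A x) (e y.1 x.1)) ∧
    (∀ A : {x : P // Q.unit ≤ Q.wayBelow e x x} → L,
      A ≤ fun y => ⨆ x : {x : P // Q.unit ≤ Q.wayBelow e x x}, Q.mul (A x) (e y.1 x.1)) ∧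
    ({U : {x : P // Q.unit ≤ Q.wayBelow e x x} → L |
        Q.IsDirClosed
          (fun A => fun y =>
            ⨆ x : {x : P // Q.unit ≤ Q.wayBelow e x x}, Q.mul (A x) (e y.1 x.1)) U}
      = {U | ∃ x : P, U = fun y => e y.1 x}) := by
  classical
  obtain ⟨href, htrans, -⟩ := hord
  set K := {x : P // Q.unit ≤ Q.wayBelow e x x} with hK
  have hcl : ∀ z y : K, (⨆ x : K, Q.mul (Q.ux z x) (e y.1 x.1)) = e y.1 z.1 :=
    fun z y => Q.cl_ux' (fun a b : K => e a.1 b.1) z y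
  refine ⟨⟨?_, ?_⟩, ?_, ?_⟩
  · -- GC1
    intro A B
    rw [Q.le_subL_iff']
    intro y
    rw [Q.mul_iSup']
    apply iSup_le; intro x
    rw [← Q.mul_assoc]
    exact le_trans (Q.mul_le_mul' (Q.le_subL_iff'.mp le_rfl x) le_rfl)
      (le_iSup (fun x : K => Q.mul (B x) (e y.1 x.1)) x)
  · -- GC2
    intro A y
    simp only
    apply iSup_le; intro x
    rw [Q.iSup_mul']
    apply iSup_le; intro z
    rw [Q.mul_assoc]
    refine le_trans (Q.mul_le_mul' le_rfl ?_)
      (le_iSup (fun x : K => Q.mul (A x) (e y.1 x.1)) z)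
    rw [Q.mul_comm]
    exact htrans y.1 x.1 z.1
  · -- LC1
    intro A y
    simp only
    refine le_trans ?_ (le_iSup (fun x : K => Q.mul (A x) (e y.1 x.1)) y)
    rw [← Q.mul_unit (A y)]
    exact Q.mul_le_mul' (by rw [Q.mul_unit]) (href y.1)
  · -- directed closed sets = principal lower sets
    ext U
    simp only [Set.mem_setOf_eq]
    constructor
    · rintro ⟨dc1, dc2, dc3, dc4⟩
      simp +zetaDelta only [hcl] at dc2 dc4
      set D : P → L := fun p =>
        if h : Q.unit ≤ Q.wayBelow e p p then U ⟨p, h⟩ else ⊥ with hD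
      have hDval : ∀ y : K, D y.1 = U y := by
        intro y; rw [hD]; simp [y.2]
      have hDdir : Q.IsDirectedL e D := by
        constructor
        · refine le_trans dc1 (iSup_le fun y => ?_)
          rw [← hDval y]
          exact le_iSup D y.1
        · intro a b
          by_cases ha : Q.unit ≤ Q.wayBelow e a a
          · by_cases hb : Q.unit ≤ Q.wayBelow e b b
            · have hDa : D a = U ⟨a, ha⟩ := hDval ⟨a, ha⟩
              have hDb : D b = U ⟨b, hb⟩ := hDval ⟨b, hb⟩
              rw [hDa, hDb]
              refine le_trans (dc4 ⟨a, ha⟩ ⟨b, hb⟩) (iSup_le fun z => ?_)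
              rw [← hDval z]
              exact le_iSup
                (fun p => Q.mul (Q.mul (D p) (e a p)) (e b p)) z.1
            · have : D b = ⊥ := by rw [hD]; simp [hb]
              rw [this, Q.mul_bot']; exact bot_le
          · have : D a = ⊥ := by rw [hD]; simp [ha]
            rw [this, Q.bot_mul']; exact bot_le
      obtain ⟨s, hs⟩ := hdcpo D hDdir
      refine ⟨s, funext fun y => le_antisymm ?_ ?_⟩
      · -- U y ≤ e y s
        have h0 : Q.unit ≤ Q.subL D (fun p => e p s) := by
          rw [← hs s]; exact href s
        have := Q.le_subL_iff'.mp h0 y.1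
        rw [Q.unit_mul', hDval y] at this
        exact this
      · -- e y s ≤ U y via compactness of y
        have h0 : Q.wayBelow e y.1 y.1 ≤
            Q.res (e y.1 s) (⨆ d, Q.mul (D d) (e y.1 d)) := by
          simp only [wayBelow]
          exact iInf_le_of_le D (iInf_le_of_le hDdir (iInf_le_of_le s (iInf_le _ hs)))
        have h1 : e y.1 s ≤ ⨆ d, Q.mul (D d) (e y.1 d) := by
          have := Q.le_res_iff'.mp (le_trans y.2 h0)
          rwa [Q.unit_mul'] at this
        refine le_trans h1 (iSup_le fun d => ?_)
        by_cases hd : Q.unit ≤ Q.wayBelow e d d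
        · have hDd : D d = U ⟨d, hd⟩ := hDval ⟨d, hd⟩
          rw [hDd]
          exact Q.le_subL_iff'.mp (dc2 ⟨d, hd⟩) y
        · have : D d = ⊥ := by rw [hD]; simp [hd]
          rw [this, Q.bot_mul']; exact bot_le
    · rintro ⟨x, rfl⟩
      have hk : ∀ p (h : Q.unit ≤ Q.wayBelow e p p), Q.kfun e x p = e p x := by
        intro p h; rw [kfun]; simp [h]
      have hk' : ∀ p, ¬ Q.unit ≤ Q.wayBelow e p p → Q.kfun e x p = ⊥ := by
        intro p h; rw [kfun]; simp [h]
      refine ⟨?_, ?_, ?_, ?_⟩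
      · -- DC1
        refine le_trans (halg x).1.1 (iSup_le fun p => ?_)
        by_cases hp : Q.unit ≤ Q.wayBelow e p p
        · rw [hk p hp]
          exact le_iSup (fun y : K => e y.1 x) ⟨p, hp⟩
        · rw [hk' p hp]; exact bot_le
      · -- DC2
        intro y
        rw [Q.le_subL_iff']
        intro z
        simp +zetaDelta only [hcl]
        rw [Q.mul_comm]
        exact htrans z.1 y.1 x
      · -- DC3
        intro y
        simp +zetaDelta only [hcl]
        have h0 : Q.wayBelow e y.1 y.1 ≤
            Q.res (e y.1 x) (⨆ d, Q.mul (Q.kfun e x d) (e y.1 d)) := by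
          simp only [wayBelow]
          exact iInf_le_of_le (Q.kfun e x) (iInf_le_of_le (halg x).1
            (iInf_le_of_le x (iInf_le _ (halg x).2)))
        have h1 : e y.1 x ≤ ⨆ d, Q.mul (Q.kfun e x d) (e y.1 d) := by
          have := Q.le_res_iff'.mp (le_trans y.2 h0)
          rwa [Q.unit_mul'] at this
        refine le_trans h1 (iSup_le fun d => ?_)
        by_cases hd : Q.unit ≤ Q.wayBelow e d d
        · rw [hk d hd]
          exact le_iSup (fun z : K => Q.mul (e z.1 x) (e y.1 z.1)) ⟨d, hd⟩
        · rw [hk' d hd, Q.bot_mul']; exact bot_le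
      · -- DC4
        intro a b
        simp +zetaDelta only [hcl]
        have h0 := (halg x).1.2 a.1 b.1
        rw [hk a.1 a.2, hk b.1 b.2] at h0
        refine le_trans h0 (iSup_le fun z => ?_)
        by_cases hz : Q.unit ≤ Q.wayBelow e z z
        · rw [hk z hz]
          exact le_iSup
            (fun w : K => Q.mul (Q.mul (e w.1 x) (e a.1 w.1)) (e b.1 w.1)) ⟨z, hz⟩
        · rw [hk' z hz, Q.bot_mul', Q.bot_mul']; exact bot_le
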